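/- Let $r_1, \ldots, r_s$ be distinct primes, $t_1, \ldots, t_s$ positive integers, and set $b = r_1^{t_1} \cdots r_s^{t_s}$. Let $x$ be an integer coprime to $b$ such that for each $i$, the multiplicative order of $x$ modulo $r_i^{t_i}$ equals $r_i^{h_i}$ for some $0 \le h_i \le t_i - 1$. Then $b$ divides $\Psi_b(x) = 1 + x + \cdots + x^{b-1}$. -/

import Mathlib

lemma sum_range_mul_geom (x : ℤ) (a d : ℕ) :
    ∑ j ∈ Finset.range (a * d), x ^ j
      = (∑ i ∈ Finset.range a, (x ^ d) ^ i) * ∑ j ∈ Finset.range d, x ^ j := by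
  induction a with
  | zero => simp
  | succ n ih =>
    rw [Nat.succ_mul, Finset.sum_range_add, ih, Finset.sum_range_succ, add_mul,
      Finset.mul_sum]
    rw [Finset.mul_sum]
    congr 1
    exact Finset.sum_congr rfl fun j _ => by rw [← pow_mul, ← pow_add, Nat.mul_comm d n]

lemma geom_dvd_of_one_mod (p : ℕ) (y : ℤ) (hy : (p:ℤ) ∣ y - 1) :
    (p:ℤ) ∣ ∑ i ∈ Finset.range p, y ^ i := by
  have hy1 : ((y : ℤ) : ZMod p) = 1 := by
    have := (ZMod.intCast_zmod_eq_zero_iff_dvd (y - 1) p).mpr hy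
    push_cast at this
    linear_combination this
  rw [← ZMod.intCast_zmod_eq_zero_iff_dvd]
  push_cast
  simp [hy1]

lemma pow_dvd_geom_sum (p : ℕ) (x : ℤ) (hx : (p:ℤ) ∣ x - 1) (k : ℕ) :
    (p:ℤ)^k ∣ ∑ j ∈ Finset.range (p^k), x ^ j := by
  induction k with
  | zero => simp
  | succ n ih =>
    have hsplit := sum_range_mul_geom x p (p^n)
    rw [← pow_succ'] at hsplit
    rw [hsplit, pow_succ']
    refine mul_dvd_mul ?_ ih
    refine geom_dvd_of_one_mod p _ ?_
    exact hx.trans (by simpa using sub_dvd_pow_sub_pow x 1 (p^n))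

theorem stmt_5 (s : ℕ) (hs : 0 < s) (r t : Fin s → ℕ)
    (hr : ∀ i, (r i).Prime) (hdist : Function.Injective r) (ht : ∀ i, 1 ≤ t i)
    (b : ℕ) (hb : b = ∏ i, r i ^ t i)
    (x : ℤ) (hcop : Int.gcd x b = 1)
    (h : Fin s → ℕ) (hh : ∀ i, h i ≤ t i - 1)
    (hord : ∀ i, orderOf (x : ZMod (r i ^ t i)) = r i ^ h i) :
    (b : ℤ) ∣ ∑ i ∈ Finset.range b, x ^ i := by
  have hcop' : IsCoprime x (b : ℤ) := Int.isCoprime_iff_gcd_eq_one.mpr hcop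
  have key : ∀ i : Fin s, ((r i ^ t i : ℕ) : ℤ) ∣ ∑ j ∈ Finset.range b, x ^ j := by
    intro i
    set p := r i with hp
    have hpp := hr i
    have hht : h i ≤ t i := le_trans (hh i) (Nat.sub_le _ _)
    -- q ∣ b
    have hq_dvd_b : p ^ t i ∣ b := hb ▸ Finset.dvd_prod_of_mem _ (Finset.mem_univ i)
    have hd_dvd_b : p ^ h i ∣ b := (pow_dvd_pow p hht).trans hq_dvd_b
    obtain ⟨m, hm⟩ := hd_dvd_b
    -- x ≡ 1 mod p
    have hp_dvd_q : p ∣ p ^ t i := dvd_pow_self p (Nat.one_le_iff_ne_zero.mp (ht i))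
    have hx1 : (p : ℤ) ∣ x - 1 := by
      have hxne : (x : ZMod p) ≠ 0 := by
        intro h0
        have hpdx : (p : ℤ) ∣ x := (ZMod.intCast_zmod_eq_zero_iff_dvd x p).mp h0
        have hpdb : (p : ℤ) ∣ (b : ℤ) := Int.natCast_dvd_natCast.mpr (hp_dvd_q.trans hq_dvd_b)
        have h2 := hpp.two_le
        rcases Int.isUnit_iff.mp (hcop'.isUnit_of_dvd' hpdx hpdb) with h1 | h1 <;> omega
      haveI : Fact p.Prime := ⟨hpp⟩
      set f := ZMod.castHom hp_dvd_q (ZMod p) with hfdef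
      have hf : f ((x : ZMod (p ^ t i))) = (x : ZMod p) := map_intCast f x
      have hdvd1 : orderOf (x : ZMod p) ∣ p ^ h i := by
        rw [← hord i, ← hf]
        exact orderOf_map_dvd f.toMonoidHom _
      have hdvd2 : orderOf (x : ZMod p) ∣ p - 1 :=
        orderOf_dvd_of_pow_eq_one (ZMod.pow_card_sub_one_eq_one hxne)
      have hcpp : Nat.Coprime p (p - 1) := by
        have h2 := hpp.two_le
        have : Nat.gcd p (p - 1) ∣ 1 := by
          have hd1 : Nat.gcd p (p - 1) ∣ p := Nat.gcd_dvd_left _ _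
          have hd2 : Nat.gcd p (p - 1) ∣ p - 1 := Nat.gcd_dvd_right _ _
          have := Nat.dvd_sub hd1 hd2
          rwa [Nat.sub_sub_self hpp.one_le] at this
        exact Nat.dvd_one.mp this
      have hco : Nat.Coprime (p ^ h i) (p - 1) := Nat.Coprime.pow_left _ hcpp
      have : orderOf (x : ZMod p) = 1 :=
        Nat.eq_one_of_dvd_coprimes hco hdvd1 hdvd2
      have hx1' : (x : ZMod p) = 1 := orderOf_eq_one_iff.mp this
      have : ((x - 1 : ℤ) : ZMod p) = 0 := by push_cast [hx1']; ring
      exact (ZMod.intCast_zmod_eq_zero_iff_dvd _ p).mp this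
    -- split the sum
    have hsplit := sum_range_mul_geom x m (p ^ h i)
    rw [Nat.mul_comm, ← hm] at hsplit
    rw [hsplit]
    -- second factor divisible by p^(h i)
    have hF2 : (p : ℤ) ^ h i ∣ ∑ j ∈ Finset.range (p ^ h i), x ^ j := by
      have := pow_dvd_geom_sum p x hx1 (h i)
      simpa using this
    -- first factor divisible by p^(t i - h i)
    have hF1 : (p : ℤ) ^ (t i - h i) ∣ ∑ k ∈ Finset.range m, (x ^ (p ^ h i)) ^ k := by
      set n := p ^ (t i - h i) with hn
      have hn_dvd_q : n ∣ p ^ t i := pow_dvd_pow p (Nat.sub_le _ _)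
      -- n ∣ m
      have hn_dvd_m : n ∣ m := by
        have h1 : p ^ t i ∣ p ^ h i * m := hm ▸ hq_dvd_b
        have h2 : p ^ t i = p ^ h i * n := by
          rw [hn, ← pow_add, Nat.add_sub_cancel' hht]
        rw [h2] at h1
        exact (Nat.mul_dvd_mul_iff_left (Nat.pow_pos hpp.pos)).mp h1
      -- x^(p^h i) = 1 in ZMod n
      have hxd : ((x : ZMod (p ^ t i)))^(p ^ h i) = 1 := by
        rw [← hord i]; exact pow_orderOf_eq_one _
      have hxdn : ((x : ZMod n))^(p ^ h i) = 1 := by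
        have := congrArg (ZMod.castHom hn_dvd_q (ZMod n)) hxd
        rw [map_pow, map_one, map_intCast] at this
        exact this
      have : (((∑ k ∈ Finset.range m, (x ^ (p ^ h i)) ^ k : ℤ)) : ZMod n) = 0 := by
        push_cast
        have hone : ∀ k ∈ Finset.range m, ((x : ZMod n) ^ (p ^ h i)) ^ k = 1 :=
          fun k _ => by rw [hxdn, one_pow]
        rw [Finset.sum_congr rfl hone, Finset.sum_const, Finset.card_range, nsmul_eq_mul,
          mul_one]
        exact (ZMod.natCast_eq_zero_iff m n).mpr hn_dvd_m
      have := (ZMod.intCast_zmod_eq_zero_iff_dvd _ n).mp this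
      simpa [hn] using this
    have : ((p : ℤ) ^ (t i - h i)) * ((p : ℤ) ^ h i) ∣ _ := mul_dvd_mul hF1 hF2
    calc ((p ^ t i : ℕ) : ℤ) = (p : ℤ) ^ (t i - h i) * (p : ℤ) ^ h i := by
          push_cast
          rw [← pow_add, Nat.sub_add_cancel hht]
      _ ∣ _ := mul_dvd_mul hF1 hF2
  -- assemble
  have : ((∏ i, (r i ^ t i : ℕ) : ℕ) : ℤ) ∣ ∑ j ∈ Finset.range b, x ^ j := by
    push_cast
    refine Finset.prod_dvd_of_coprime ?_ (fun i _ => by exact_mod_cast key i)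
    intro i _ j _ hij
    simp only [Function.onFun]
    rw [Int.isCoprime_iff_gcd_eq_one]
    have hco := (Nat.coprime_primes (hr i) (hr j)).mpr (fun e => hij (hdist e))
    exact_mod_cast (Nat.Coprime.pow (t i) (t j) hco)
  rwa [← hb] at this
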